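/- Let ‖·‖ be a norm on ℝ², and let e₁, e₂ be a ℤ-basis of the integer lattice ℤ² such that ‖e₁‖ ≤ ‖e₂‖ and ‖e₂‖ ≤ ‖v‖ for every v ∈ ℤ² with v ∉ {0, e₁, −e₁} (i.e. e₁ and e₂ are the two shortest integer vectors). Then for all real numbers x, y: ‖x·e₁ + y·e₂‖ ≥ (1/2)·max( |x|·‖e₁‖ , |y|·‖e₂‖ ); in particular ‖x·e₁ + y·e₂‖ ≥ (1/4)·( |x|·‖e₁‖ + |y|·‖e₂‖ ). -/
import Mathlib


open Real

/-- Norm-geometry claim: if `e₁, e₂` is a ℤ-basis of the integer lattice `ℤ² ⊂ ℝ²` whose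
members are the two shortest nonzero integer vectors for a norm `N` on `ℝ²`, then for all
reals `x, y` one has `N(x·e₁ + y·e₂) ≥ (1/2)·max(|x|·N e₁, |y|·N e₂)`, and in particular
`N(x·e₁ + y·e₂) ≥ (1/4)·(|x|·N e₁ + |y|·N e₂)`. -/
theorem norm_lower_bound_of_shortest_basis
    (N : ℝ × ℝ → ℝ)
    (N_add : ∀ v w, N (v + w) ≤ N v + N w)
    (N_smul : ∀ (c : ℝ) v, N (c • v) = |c| * N v)
    (N_eq_zero : ∀ v, N v = 0 ↔ v = 0)
    (e₁ e₂ : ℤ × ℤ)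
    (hbasis : ∀ v : ℤ × ℤ, ∃ m n : ℤ, v = m • e₁ + n • e₂)
    (E₁ E₂ : ℝ × ℝ)
    (hE₁ : E₁ = ((e₁.1 : ℝ), (e₁.2 : ℝ))) (hE₂ : E₂ = ((e₂.1 : ℝ), (e₂.2 : ℝ)))
    (h₁₂ : N E₁ ≤ N E₂)
    (h₂ : ∀ v : ℤ × ℤ, v ≠ 0 → v ≠ e₁ → v ≠ -e₁ →
      N E₂ ≤ N ((v.1 : ℝ), (v.2 : ℝ))) :
    ∀ x y : ℝ,
      N (x • E₁ + y • E₂) ≥ (1 / 2) * max (|x| * N E₁) (|y| * N E₂)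
      ∧ N (x • E₁ + y • E₂) ≥ (1 / 4) * (|x| * N E₁ + |y| * N E₂) := by
  -- basic consequences of the norm axioms
  have h0 : N 0 = 0 := (N_eq_zero 0).mpr rfl
  have Nneg : ∀ v, N (-v) = N v := by
    intro v
    have := N_smul (-1) v
    simpa using this
  have Nnn : ∀ v, 0 ≤ N v := by
    intro v
    have h := N_add v (-v)
    rw [add_neg_cancel, h0, Nneg] at h
    linarith
  have Ntri : ∀ v w : ℝ × ℝ, N v ≤ N w + N (v - w) := by
    intro v w
    have e : w + (v - w) = v := by abel
    have := N_add w (v - w)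
    rwa [e] at this
  -- determinant of (e₁, e₂) is a unit
  obtain ⟨a, b, hab⟩ := hbasis (1, 0)
  obtain ⟨c, d, hcd⟩ := hbasis (0, 1)
  simp only [Prod.ext_iff, Prod.fst_add, Prod.snd_add, Prod.smul_fst, Prod.smul_snd,
    smul_eq_mul] at hab hcd
  obtain ⟨hA1, hA2⟩ := hab
  obtain ⟨hC1, hC2⟩ := hcd
  have hDunit : (e₁.1 * e₂.2 - e₁.2 * e₂.1) * (a * d - b * c) = 1 := by
    linear_combination (c * e₁.2 + d * e₂.2) * hA1.symm + hC2.symm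
      - (a * e₁.2 + b * e₂.2) * hC1.symm
  have hD : (e₁.1 * e₂.2 - e₁.2 * e₂.1) ≠ 0 := by
    intro h
    rw [h, zero_mul] at hDunit
    exact absurd hDunit (by norm_num)
  -- uniqueness of integer coefficients
  have huniq : ∀ m n m' n' : ℤ, m • e₁ + n • e₂ = m' • e₁ + n' • e₂ → m = m' ∧ n = n' := by
    intro m n m' n' h
    simp only [Prod.ext_iff, Prod.fst_add, Prod.snd_add, Prod.smul_fst, Prod.smul_snd,
      smul_eq_mul] at h
    obtain ⟨h1, h2⟩ := h
    constructor
    · have : (m - m') * (e₁.1 * e₂.2 - e₁.2 * e₂.1) = 0 := by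
        linear_combination e₂.2 * h1 - e₂.1 * h2
      rcases mul_eq_zero.mp this with h' | h'
      · omega
      · exact absurd h' hD
    · have : (n - n') * (e₁.1 * e₂.2 - e₁.2 * e₂.1) = 0 := by
        linear_combination e₁.1 * h2 - e₁.2 * h1
      rcases mul_eq_zero.mp this with h' | h'
      · omega
      · exact absurd h' hD
  -- coercion of integer combinations to ℝ²
  have realize : ∀ m n : ℤ, (((m • e₁ + n • e₂).1 : ℝ), ((m • e₁ + n • e₂).2 : ℝ))
      = (m : ℝ) • E₁ + (n : ℝ) • E₂ := by
    intro m n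
    rw [hE₁, hE₂]
    simp only [Prod.ext_iff, Prod.fst_add, Prod.snd_add, Prod.smul_fst, Prod.smul_snd,
      smul_eq_mul]
    push_cast
    constructor <;> ring
  -- the key lower bound from the shortest-vector hypothesis
  have keyL : ∀ m n : ℤ, (m ≠ 0 ∨ n ≠ 0) → (m ≠ 1 ∨ n ≠ 0) → (m ≠ -1 ∨ n ≠ 0) →
      N E₂ ≤ N ((m : ℝ) • E₁ + (n : ℝ) • E₂) := by
    intro m n hc0 hc1 hc2
    rw [← realize]
    apply h₂
    · intro h
      have h' : m • e₁ + n • e₂ = (0 : ℤ) • e₁ + (0 : ℤ) • e₂ := by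
        simpa using h
      obtain ⟨hm, hn⟩ := huniq _ _ _ _ h'
      rcases hc0 with h'' | h'' <;> exact h'' (by omega)
    · intro h
      have h' : m • e₁ + n • e₂ = (1 : ℤ) • e₁ + (0 : ℤ) • e₂ := by
        simpa using h
      obtain ⟨hm, hn⟩ := huniq _ _ _ _ h'
      rcases hc1 with h'' | h'' <;> exact h'' (by omega)
    · intro h
      have h' : m • e₁ + n • e₂ = (-1 : ℤ) • e₁ + (0 : ℤ) • e₂ := by
        simpa using h
      obtain ⟨hm, hn⟩ := huniq _ _ _ _ h'
      rcases hc2 with h'' | h'' <;> exact h'' (by omega)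
  have hNE₁ : 0 ≤ N E₁ := Nnn E₁
  have hNE₂ : 0 ≤ N E₂ := Nnn E₂
  -- bound along the line t ↦ t•E₁ + E₂
  have hG : ∀ t : ℝ, (1 / 2) * N E₂ ≤ N (t • E₁ + E₂) := by
    intro t
    have hkey : N E₂ ≤ N ((round t : ℝ) • E₁ + E₂) := by
      have := keyL (round t) 1 (Or.inr one_ne_zero) (Or.inr one_ne_zero) (Or.inr one_ne_zero)
      simpa using this
    have htri : N ((round t : ℝ) • E₁ + E₂) ≤ N (t • E₁ + E₂) + N (((round t : ℝ) - t) • E₁) := by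
      have e : (round t : ℝ) • E₁ + E₂ - (t • E₁ + E₂) = ((round t : ℝ) - t) • E₁ := by
        rw [sub_smul]; abel
      have := Ntri ((round t : ℝ) • E₁ + E₂) (t • E₁ + E₂)
      rwa [e] at this
    have habs : |(round t : ℝ) - t| ≤ 1 / 2 := by
      rw [abs_sub_comm]; exact abs_sub_round t
    rw [N_smul] at htri
    have hmul : |(round t : ℝ) - t| * N E₁ ≤ (1 / 2) * N E₁ :=
      mul_le_mul_of_nonneg_right habs hNE₁
    linarith
  -- helper bound along the line s ↦ E₁ + s•E₂
  have Hn : ∀ (n : ℤ) (s : ℝ), n ≠ 0 → N E₂ - |(n : ℝ) - s| * N E₂ ≤ N (E₁ + s • E₂) := by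
    intro n s hn
    have hkey : N E₂ ≤ N (E₁ + (n : ℝ) • E₂) := by
      have := keyL 1 n (Or.inl one_ne_zero) (Or.inr hn) (Or.inl (by norm_num))
      simpa using this
    have e : E₁ + (n : ℝ) • E₂ - (E₁ + s • E₂) = ((n : ℝ) - s) • E₂ := by
      rw [sub_smul]; abel
    have htri := Ntri (E₁ + (n : ℝ) • E₂) (E₁ + s • E₂)
    rw [e, N_smul] at htri
    linarith
  have hH : ∀ s : ℝ, (1 / 2) * N E₁ ≤ N (E₁ + s • E₂) := by
    intro s
    rcases le_or_gt (1 / 2) s with hs | hs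
    · -- s ≥ 1/2 : nearest integer is ≥ 1
      have hr : 1 ≤ round s := by
        rw [round_eq]
        exact Int.le_floor.mpr (by push_cast; linarith)
      have hb := Hn (round s) s (by omega)
      have habs : |(round s : ℝ) - s| ≤ 1 / 2 := by
        rw [abs_sub_comm]; exact abs_sub_round s
      have hmul : |(round s : ℝ) - s| * N E₂ ≤ (1 / 2) * N E₂ :=
        mul_le_mul_of_nonneg_right habs hNE₂
      linarith
    · rcases le_or_gt s (-(1 / 2)) with hs' | hs'
      · -- s ≤ -1/2
        have hr : 1 ≤ round (-s) := by
          rw [round_eq]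
          exact Int.le_floor.mpr (by push_cast; linarith)
        have hb := Hn (-(round (-s))) s (by omega)
        have habs : |((-(round (-s)) : ℤ) : ℝ) - s| ≤ 1 / 2 := by
          push_cast
          rw [show -((round (-s) : ℤ) : ℝ) - s = (-s) - ((round (-s) : ℤ) : ℝ) by ring]
          exact abs_sub_round (-s)
        have hmul : |((-(round (-s)) : ℤ) : ℝ) - s| * N E₂ ≤ (1 / 2) * N E₂ :=
          mul_le_mul_of_nonneg_right habs hNE₂
        linarith
      · -- |s| < 1/2
        rcases le_or_gt (|s| * N E₂) ((1 / 2) * N E₁) with hb | hb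
        · -- the s•E₂ perturbation is small
          have htri := Ntri E₁ (E₁ + s • E₂)
          have e : E₁ - (E₁ + s • E₂) = (-s) • E₂ := by
            rw [neg_smul]; abel
          rw [e, N_smul, abs_neg] at htri
          linarith
        · rcases le_or_gt 0 s with h0s | h0s
          · have hbnd := Hn 1 s one_ne_zero
            have habs : |((1 : ℤ) : ℝ) - s| = 1 - s := by
              rw [abs_of_nonneg (by push_cast; linarith)]; push_cast; ring
            rw [habs] at hbnd
            rw [abs_of_nonneg h0s] at hb
            nlinarith
          · have hbnd := Hn (-1) s (by norm_num)
            have habs : |((-1 : ℤ) : ℝ) - s| = 1 + s := by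
              rw [abs_of_nonpos (by push_cast; linarith)]; push_cast; ring
            rw [habs] at hbnd
            rw [abs_of_neg h0s] at hb
            nlinarith
  -- now the main claims
  intro x y
  have key1 : N (x • E₁ + y • E₂) ≥ (1 / 2) * (|x| * N E₁) := by
    rcases eq_or_ne x 0 with rfl | hx
    · have := Nnn ((0 : ℝ) • E₁ + y • E₂)
      rw [abs_zero]
      linarith
    · have hrw : x • E₁ + y • E₂ = x • (E₁ + (y / x) • E₂) := by
        rw [smul_add, smul_smul]
        congr 2
        field_simp
      rw [hrw, N_smul]
      have h := hH (y / x)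
      have := mul_le_mul_of_nonneg_left h (abs_nonneg x)
      linarith
  have key2 : N (x • E₁ + y • E₂) ≥ (1 / 2) * (|y| * N E₂) := by
    rcases eq_or_ne y 0 with rfl | hy
    · have := Nnn (x • E₁ + (0 : ℝ) • E₂)
      rw [abs_zero]
      linarith
    · have hrw : x • E₁ + y • E₂ = y • ((x / y) • E₁ + E₂) := by
        rw [smul_add, smul_smul]
        congr 2
        field_simp
      rw [hrw, N_smul]
      have h := hG (x / y)
      have := mul_le_mul_of_nonneg_left h (abs_nonneg y)
      linarith
  constructor
  · rcases le_total (|x| * N E₁) (|y| * N E₂) with h | h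
    · rw [max_eq_right h]; exact key2
    · rw [max_eq_left h]; exact key1
  · linarith
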